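/- Let W[1..m] be a sequence of m ≥ 1 binary strings of length ℓ ≥ 1 and let T = SeqToString_ℓ(W), with s(i) as in the definition of SeqToString. Then for every X ∈ {0,1}^{≤ℓ} and every i ∈ [0..m], it holds PrefixRank(W,i,X) = RangeBeg(X', T) − α, where X' = rev(X) · 4 · s(i) and α = RangeBeg(rev(X)·4, T). -/

import Mathlib

/-- Strict lexicographic order on strings: `U ≺ V` iff `U` is a proper prefix of `V`,
or `U` and `V` first differ at a position where `U` has the smaller symbol. -/
def LexLt {α : Type*} [LT α] (U V : List α) : Prop := List.Lex (· < ·) U V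

/-- Non-strict lexicographic order on strings. -/
def LexLe {α : Type*} [LT α] (U V : List α) : Prop := LexLt U V ∨ U = V

/-- The suffix `T[j..|T|]` of `T` (1-based index `j`). -/
def Suf {α : Type*} (T : List α) (j : ℕ) : List α := T.drop (j - 1)

/-- `Occ P T` is the set of starting positions (1-based) of occurrences of `P` in `T`. -/
def Occ {α : Type*} (P T : List α) : Set ℕ :=
  { j | 1 ≤ j ∧ j + P.length ≤ T.length + 1 ∧ (Suf T j).take P.length = P }

/-- `RangeBeg P T` = number of suffixes of `T` lexicographically smaller than `P`. -/
noncomputable def RangeBeg {α : Type*} [LT α] (P T : List α) : ℕ :=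
  { j | 1 ≤ j ∧ j ≤ T.length ∧ LexLt (Suf T j) P }.ncard

/-- `RangeEnd P T = RangeBeg P T + |Occ P T|`. -/
noncomputable def RangeEnd {α : Type*} [LT α] (P T : List α) : ℕ :=
  RangeBeg P T + (Occ P T).ncard

/-- `LexRange P₁ P₂ T` = positions `j ∈ [1..|T|]` with `P₁ ⪯ T[j..|T|] ≺ P₂`. -/
def LexRange {α : Type*} [LT α] (P₁ P₂ T : List α) : Set ℕ :=
  { j | 1 ≤ j ∧ j ≤ T.length ∧ LexLe P₁ (Suf T j) ∧ LexLt (Suf T j) P₂ }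

/-- `sa` is the suffix array of `T` (1-based): a permutation of `[1..|T|]` listing the
starting positions of the suffixes of `T` in increasing lexicographic order. -/
def IsSuffixArray {α : Type*} [LT α] (T : List α) (sa : ℕ → ℕ) : Prop :=
  (∀ i, 1 ≤ i → i ≤ T.length → 1 ≤ sa i ∧ sa i ≤ T.length) ∧
  (∀ j, 1 ≤ j → j ≤ T.length → ∃ i, 1 ≤ i ∧ i ≤ T.length ∧ sa i = j) ∧
  (∀ i j, 1 ≤ i → i < j → j ≤ T.length → LexLt (Suf T (sa i)) (Suf T (sa j)))

/-- `binSym k x` : the length-`k` binary representation of `x` (MSB first, leading zeros). -/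
def binSym (k x : ℕ) : List ℕ := (List.range k).map fun i => x / 2 ^ (k - 1 - i) % 2

/-- `binStr k S` = `bin_k(S[1]) · bin_k(S[2]) · … · bin_k(S[|S|])`. -/
def binStr (k : ℕ) (S : List ℕ) : List ℕ := (S.map (binSym k)).flatten

/-- `ebinSym k x = 1^{k+1} · 0 · bin_k(x) · 0`. -/
def ebinSym (k x : ℕ) : List ℕ := List.replicate (k + 1) 1 ++ [0] ++ binSym k x ++ [0]

/-- `ebinStr k S` = concatenation of `ebin_k(S[i])` for `i = 1, …, |S|`. -/
def ebinStr (k : ℕ) (S : List ℕ) : List ℕ := (S.map (ebinSym k)).flatten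

/-- `sEnc k i` : length-`k` base-2 representation of `i` with `0 ↦ 2` and `1 ↦ 3`. -/
def sEnc (k i : ℕ) : List ℕ := (binSym k i).map (· + 2)

/-- `SeqToString m W = ⊙_{i=1}^{m} rev(W[i]) · 4 · s(i-1)` with `k = 1 + ⌊log₂ m⌋`. -/
def SeqToString (m : ℕ) (W : ℕ → List ℕ) : List ℕ :=
  ((List.range m).map
    fun i => (W (i + 1)).reverse ++ [4] ++ sEnc (1 + Nat.log 2 m) i).flatten

/-- `PermSeqToString m π W = ⊙_{i=1}^{m} rev(W[π[i]]) · 4 · s(π[i]-1)`. -/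
def PermSeqToString (m : ℕ) (perm : ℕ → ℕ) (W : ℕ → List ℕ) : List ℕ :=
  ((List.range m).map
    fun i => (W (perm (i + 1))).reverse ++ [4]
      ++ sEnc (1 + Nat.log 2 m) (perm (i + 1) - 1)).flatten

/-- `PrefixRank W j X = |{ i ∈ [1..j] : X is a prefix of W[i] }|`. -/
noncomputable def PrefixRank {α : Type*} (W : ℕ → List α) (j : ℕ) (X : List α) : ℕ :=
  { i | 1 ≤ i ∧ i ≤ j ∧ X <+: W i }.ncard

/-- `p` is the `r`-th smallest element of the set `A ⊆ ℕ`. -/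
def IsKthSmallest (A : Set ℕ) (r p : ℕ) : Prop :=
  p ∈ A ∧ (A ∩ Set.Iic p).ncard = r

/-- Ceiling division `⌈a / b⌉` of positive naturals. -/
def cdiv (a b : ℕ) : ℕ := (a + b - 1) / b

/-- Alphabet inversion: `inv_σ(S)[i] = σ - 1 - S[i]`. -/
def invStr (σ : ℕ) (S : List ℕ) : List ℕ := S.map fun a => σ - 1 - a

/-- `p` is a period of `S`: `1 ≤ p ≤ |S|` and `S[i] = S[i+p]` for all `i ∈ [1..|S|-p]`. -/
def IsPeriod {α : Type*} (S : List α) (p : ℕ) : Prop :=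
  1 ≤ p ∧ p ≤ S.length ∧ S.drop p <+: S

/-- `per S`: the smallest period of `S`. -/
noncomputable def per {α : Type*} (S : List α) : ℕ := sInf { p | IsPeriod S p }

/-- `P` is `τ`-periodic: `|P| ≥ 3τ - 1` and `per(P[1..3τ-1]) ≤ τ/3`. -/
noncomputable def TauPeriodic {α : Type*} (τ : ℕ) (P : List α) : Prop :=
  3 * τ ≤ P.length + 1 ∧ 3 * per (P.take (3 * τ - 1)) ≤ τ

/-- `R(τ,T) = { i ∈ [1..n-3τ+2] : per(T[i..i+3τ-2]) ≤ τ/3 }`. -/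
noncomputable def Rset {α : Type*} (τ : ℕ) (T : List α) : Set ℕ :=
  { i | 1 ≤ i ∧ i + 3 * τ ≤ T.length + 2 ∧ 3 * per ((Suf T i).take (3 * τ - 1)) ≤ τ }

/-- `S` is a `τ`-synchronizing set of `T` (consistency and density conditions). -/
noncomputable def IsSyncSet {α : Type*} (τ : ℕ) (T : List α) (S : Set ℕ) : Prop :=
  (∀ j ∈ S, 1 ≤ j ∧ j + 2 * τ ≤ T.length + 1) ∧
  (∀ i j, 1 ≤ i → i + 2 * τ ≤ T.length + 1 → 1 ≤ j → j + 2 * τ ≤ T.length + 1 →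
    (Suf T i).take (2 * τ) = (Suf T j).take (2 * τ) → (i ∈ S ↔ j ∈ S)) ∧
  (∀ i, 1 ≤ i → i + 3 * τ ≤ T.length + 2 → (S ∩ Set.Ico i (i + τ) = ∅ ↔ i ∈ Rset τ T))

/-- `succ_S(x) = min { x' ∈ S : x' ≥ x }`. -/
noncomputable def succS (S : Set ℕ) (x : ℕ) : ℕ := sInf (S ∩ Set.Ici x)

/-- `DistPrefixes(τ,T,S) = { T[j..succ_S(j)+2τ) : j ∈ [1..n-3τ+2] \ R(τ,T) }`. -/
noncomputable def DistPrefixes {α : Type*} (τ : ℕ) (T : List α) (S : Set ℕ) : Set (List α) :=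
  (fun j => (Suf T j).take (succS S j + 2 * τ - j)) ''
    { j | 1 ≤ j ∧ j + 3 * τ ≤ T.length + 2 ∧ j ∉ Rset τ T }

/-- `r` is the value of the prefix RMQ: the smallest index `i ∈ (b..e]` with `X` a prefix of
`W[i]` minimizing `A[i]` (ties broken towards the smaller index). -/
def IsPrefixRMQ (A : ℕ → ℤ) (W : ℕ → List ℕ) (b e : ℕ) (X : List ℕ) (r : ℕ) : Prop :=
  (b < r ∧ r ≤ e ∧ X <+: W r) ∧
  (∀ i, b < i → i ≤ e → X <+: W i → A r ≤ A i) ∧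
  (∀ i, b < i → i ≤ e → X <+: W i → A i = A r → r ≤ i)

section Helpers
-- (helpers pasted below)


lemma lexlt_cons_iff {a b : ℕ} {u v : List ℕ} :
    LexLt (a::u) (b::v) ↔ a < b ∨ (a = b ∧ LexLt u v) := by
  constructor
  · intro h
    cases h with
    | rel h => exact Or.inl h
    | cons h => exact Or.inr ⟨rfl, h⟩
  · rintro (h | ⟨rfl, h⟩)
    · exact List.Lex.rel h
    · exact List.Lex.cons h

lemma not_lexlt_nil (u : List ℕ) : ¬ LexLt u [] := by
  intro h; cases h

lemma lexlt_irrefl (u : List ℕ) : ¬ LexLt u u := by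
  induction u with
  | nil => exact not_lexlt_nil []
  | cons a u ih =>
    intro h
    rcases lexlt_cons_iff.mp h with h | ⟨_, h⟩
    · omega
    · exact ih h

lemma lex_total (u v : List ℕ) : LexLt u v ∨ u = v ∨ LexLt v u := by
  induction u generalizing v with
  | nil =>
    cases v with
    | nil => exact Or.inr (Or.inl rfl)
    | cons b v => exact Or.inl List.Lex.nil
  | cons a u ih =>
    cases v with
    | nil => exact Or.inr (Or.inr List.Lex.nil)
    | cons b v =>
      rcases Nat.lt_trichotomy a b with h | rfl | h
      · exact Or.inl (List.Lex.rel h)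
      · rcases ih v with h | rfl | h
        · exact Or.inl (List.Lex.cons h)
        · exact Or.inr (Or.inl rfl)
        · exact Or.inr (Or.inr (List.Lex.cons h))
      · exact Or.inr (Or.inr (List.Lex.rel h))

lemma lexlt_append_cancel (u s t : List ℕ) : LexLt (u ++ s) (u ++ t) ↔ LexLt s t := by
  induction u with
  | nil => rfl
  | cons a u ih => simpa [lexlt_cons_iff] using ih

lemma prefix_lexle {u v : List ℕ} (h : u <+: v) : LexLe u v := by
  induction u generalizing v with
  | nil =>
    cases v with
    | nil => exact Or.inr rfl
    | cons b v => exact Or.inl List.Lex.nil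
  | cons a u ih =>
    obtain ⟨w, rfl⟩ := h
    rcases ih (u.prefix_append w) with h | h
    · exact Or.inl (List.Lex.cons h)
    · exact Or.inr (by simp [h.symm])

lemma not_lexlt_of_prefix {u v : List ℕ} (h : u <+: v) : ¬ LexLt v u := by
  obtain ⟨w, rfl⟩ := h
  intro hc
  have := (lexlt_append_cancel u w []).mp (by simpa using hc)
  exact not_lexlt_nil _ this

lemma prefix_of_lexle_of_lexlt_append {p s q : List ℕ}
    (h1 : LexLe p s) (h2 : LexLt s (p ++ q)) : p <+: s := by
  induction p generalizing s with
  | nil => exact List.nil_prefix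
  | cons a p ih =>
    cases s with
    | nil =>
      rcases h1 with h | h
      · exact absurd h (not_lexlt_nil _)
      · exact absurd h.symm (by simp)
    | cons b s =>
      rcases h1 with h | h
      · rcases lexlt_cons_iff.mp h with hlt | ⟨rfl, htail⟩
        · rcases lexlt_cons_iff.mp h2 with h' | ⟨rfl, h'⟩ <;> omega
        · rcases lexlt_cons_iff.mp h2 with h' | ⟨_, h'⟩
          · omega
          · exact List.cons_prefix_cons.mpr ⟨rfl, ih (Or.inl htail) h'⟩
      · rw [h]

lemma lexlt_append_left_of_length_eq {u v : List ℕ} (w : List ℕ)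
    (h : u.length = v.length) : LexLt (u ++ w) v ↔ LexLt u v := by
  induction u generalizing v with
  | nil =>
    cases v with
    | nil =>
      constructor
      · intro h'; exact absurd h' (not_lexlt_nil _)
      · intro h'; exact absurd h' (not_lexlt_nil _)
    | cons b v => simp at h
  | cons a u ih =>
    cases v with
    | nil => simp at h
    | cons b v =>
      simp only [List.length_cons, Nat.succ.injEq] at h
      simp only [List.cons_append, lexlt_cons_iff, ih h]



lemma binSym_length (k x : ℕ) : (binSym k x).length = k := by simp [binSym]

lemma sEnc_length (k x : ℕ) : (sEnc k x).length = k := by simp [sEnc, binSym]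

lemma binSym_succ (k a : ℕ) : binSym (k+1) a = (a / 2^k % 2) :: binSym k a := by
  apply List.ext_getElem
  · simp [binSym_length]
  intro n h1 h2
  cases n with
  | zero =>
    simp only [binSym, List.getElem_map, List.getElem_range, List.getElem_cons_zero]
    have h3 : k + 1 - 1 - 0 = k := by omega
    rw [h3]
  | succ n =>
    simp only [binSym, List.getElem_map, List.getElem_range, List.getElem_cons_succ]
    have h3 : k + 1 - 1 - (n + 1) = k - 1 - n := by omega
    rw [h3]

lemma binSym_mod (k a : ℕ) : binSym k (a % 2^k) = binSym k a := by
  unfold binSym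
  apply List.map_congr_left
  intro i hi
  simp only [List.mem_range] at hi
  set j := k - 1 - i with hj
  have hjk : j < k := by omega
  have hsplit : 2 ^ k = 2 ^ (k - j) * 2 ^ j := by
    rw [← pow_add]; congr 1; omega
  have h2 : 2^(k-j-1) * 2 = 2^(k-j) := by
    rw [← pow_succ]
    congr 1
    omega
  have h3 : 2^(k-j-1) * (a / 2^k) * 2 * 2^j = 2^k * (a / 2^k) := by
    calc 2^(k-j-1) * (a / 2^k) * 2 * 2^j = (2^(k-j-1) * 2) * 2^j * (a / 2^k) := by ring
    _ = (2^(k-j) * 2^j) * (a / 2^k) := by rw [h2]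
    _ = 2^k * (a / 2^k) := by rw [← hsplit]
  have hdm := Nat.div_add_mod a (2^k)
  have hq : a = a % 2^k + (2^(k-j-1) * (a / 2^k) * 2) * 2 ^ j := by linarith
  have e1 : a / 2^j = a % 2^k / 2^j + 2^(k-j-1) * (a / 2^k) * 2 := by
    conv_lhs => rw [hq]
    rw [Nat.add_mul_div_right _ _ (Nat.pow_pos (n := j) (by norm_num))]
  conv_rhs => rw [e1]
  rw [Nat.add_mul_mod_self_right]

lemma binSym_lt_iff : ∀ (k a b : ℕ), a < 2^k → b < 2^k →
    (LexLt (binSym k a) (binSym k b) ↔ a < b) := by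
  intro k
  induction k with
  | zero =>
    intro a b ha hb
    simp only [binSym, List.range_zero, List.map_nil]
    exact ⟨fun h => absurd h (not_lexlt_nil _), fun h => by omega⟩
  | succ k ih =>
    intro a b ha hb
    rw [binSym_succ, binSym_succ, ← binSym_mod k a, ← binSym_mod k b, lexlt_cons_iff,
      ih _ _ (Nat.mod_lt _ (Nat.pow_pos (n := k) (by norm_num)))
           (Nat.mod_lt _ (Nat.pow_pos (n := k) (by norm_num)))]
    have hNpos : 0 < 2^k := Nat.pow_pos (n := k) (by norm_num)
    rw [pow_succ] at ha hb
    generalize hN : (2:ℕ)^k = N at *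
    obtain ⟨qa, ra, hra, rfl⟩ : ∃ q r, r < N ∧ N * q + r = a :=
      ⟨a/N, a%N, Nat.mod_lt _ hNpos, Nat.div_add_mod a N⟩
    obtain ⟨qb, rb, hrb, rfl⟩ : ∃ q r, r < N ∧ N * q + r = b :=
      ⟨b/N, b%N, Nat.mod_lt _ hNpos, Nat.div_add_mod b N⟩
    have e1 : (N*qa + ra)/N = qa := by
      rw [Nat.mul_add_div hNpos, Nat.div_eq_of_lt hra]
      omega
    have e2 : (N*qa + ra)%N = ra := by
      rw [Nat.mul_add_mod]; exact Nat.mod_eq_of_lt hra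
    have e3 : (N*qb + rb)/N = qb := by
      rw [Nat.mul_add_div hNpos, Nat.div_eq_of_lt hrb]
      omega
    have e4 : (N*qb + rb)%N = rb := by
      rw [Nat.mul_add_mod]; exact Nat.mod_eq_of_lt hrb
    rw [e1, e2, e3, e4]
    have hqa : qa < 2 := by
      have : N * qa < N * 2 := by omega
      exact Nat.lt_of_mul_lt_mul_left this
    have hqb : qb < 2 := by
      have : N * qb < N * 2 := by omega
      exact Nat.lt_of_mul_lt_mul_left this
    rw [Nat.mod_eq_of_lt hqa, Nat.mod_eq_of_lt hqb]
    have h1 : qa = 0 ∨ qa = 1 := by omega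
    have h2 : qb = 0 ∨ qb = 1 := by omega
    clear e1 e2 e3 e4
    rcases h1 with h1 | h1 <;> rcases h2 with h2 | h2 <;>
      simp only [h1, h2, Nat.mul_zero, Nat.mul_one, Nat.zero_add, true_and] <;> omega

lemma lexlt_map_add2 : ∀ (u v : List ℕ),
    (LexLt (u.map (· + 2)) (v.map (· + 2)) ↔ LexLt u v) := by
  intro u
  induction u with
  | nil =>
    intro v
    cases v with
    | nil => simp [LexLt]
    | cons b v =>
      simp only [List.map_nil, List.map_cons]
      exact ⟨fun _ => List.Lex.nil, fun _ => List.Lex.nil⟩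
  | cons a u ih =>
    intro v
    cases v with
    | nil =>
      constructor
      · intro h; exact absurd h (not_lexlt_nil _)
      · intro h; exact absurd h (not_lexlt_nil _)
    | cons b v =>
      simp only [List.map_cons, lexlt_cons_iff, ih v]
      rw [show (a + 2 < b + 2) = (a < b) from propext (by omega),
        show ((a:ℕ) + 2 = b + 2) = (a = b) from propext (by omega)]

lemma sEnc_lt_iff (k a b : ℕ) (ha : a < 2^k) (hb : b < 2^k) :
    LexLt (sEnc k a) (sEnc k b) ↔ a < b := by
  unfold sEnc
  rw [lexlt_map_add2, binSym_lt_iff k a b ha hb]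

lemma sEnc_mem (k t a : ℕ) (h : a ∈ sEnc k t) : a = 2 ∨ a = 3 := by
  simp only [sEnc, binSym, List.mem_map, List.mem_range] at h
  obtain ⟨b, ⟨i, _, rfl⟩, rfl⟩ := h
  omega

lemma flatten_drop_mul {α : Type*} {L : ℕ} :
    ∀ (t : ℕ) (l : List (List α)), (∀ s ∈ l, s.length = L) →
      l.flatten.drop (t * L) = (l.drop t).flatten := by
  intro t
  induction t with
  | zero => simp
  | succ t ih =>
    intro l h
    cases l with
    | nil => simp
    | cons s l' =>
      have hs : s.length = L := h s List.mem_cons_self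
      have h1 : (s :: l').flatten = s ++ l'.flatten := by simp
      rw [h1, List.drop_append]
      have h2 : List.drop ((t+1) * L) s = [] := by
        rw [List.drop_eq_nil_iff, hs]
        nlinarith
      have h3 : (t+1) * L - s.length = t * L := by rw [hs]; rw [Nat.succ_mul]; omega
      rw [h2, h3, List.nil_append, ih l' (fun u hu => h u (List.mem_cons_of_mem _ hu))]
      simp

lemma flatten_length_mul {α : Type*} {L : ℕ} :
    ∀ (l : List (List α)), (∀ s ∈ l, s.length = L) → l.flatten.length = l.length * L := by
  intro l
  induction l with
  | nil => simp
  | cons s l' ih =>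
    intro h
    simp only [List.flatten_cons, List.length_append, List.length_cons,
      h s List.mem_cons_self, ih (fun u hu => h u (List.mem_cons_of_mem _ hu))]
    ring


lemma lexlt_append_right {s p : List ℕ} (q : List ℕ) (h : LexLt s p) : LexLt s (p ++ q) := by
  induction h with
  | nil => exact List.Lex.nil
  | rel h => exact List.Lex.rel h
  | cons _ ih => exact List.Lex.cons ih

end Helpers

theorem stmt8 (m ℓ : ℕ) (hm : 1 ≤ m) (hℓ : 1 ≤ ℓ) (W : ℕ → List ℕ)
    (hWlen : ∀ i, 1 ≤ i → i ≤ m → (W i).length = ℓ)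
    (hWbin : ∀ i, 1 ≤ i → i ≤ m → ∀ a ∈ W i, a < 2)
    (X : List ℕ) (hXlen : X.length ≤ ℓ) (hXbin : ∀ a ∈ X, a < 2)
    (i : ℕ) (hi : i ≤ m) :
    PrefixRank W i X =
      RangeBeg (X.reverse ++ [4] ++ sEnc (1 + Nat.log 2 m) i) (SeqToString m W) -
        RangeBeg (X.reverse ++ [4]) (SeqToString m W) := by
  classical
  set k := 1 + Nat.log 2 m with hk
  set L := ℓ + 1 + k with hL
  set blk : ℕ → List ℕ := fun t => (W (t+1)).reverse ++ [4] ++ sEnc k t with hblk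
  set T := SeqToString m W with hTset
  set P0 := X.reverse ++ [4] with hP0
  have hTdef : T = ((List.range m).map blk).flatten := rfl
  have hmlt : m < 2^k := by
    rw [hk, Nat.add_comm]
    exact Nat.lt_pow_succ_log_self (by norm_num) m
  have hbl : ∀ t, t < m → (blk t).length = L := by
    intro t ht
    simp only [hblk, List.length_append, List.length_reverse, List.length_cons,
      List.length_nil, sEnc_length, hWlen (t+1) (by omega) (by omega), hL]
  have hblen : ∀ s ∈ (List.range m).map blk, s.length = L := by
    intro s hs
    simp only [List.mem_map, List.mem_range] at hs
    obtain ⟨t, ht, rfl⟩ := hs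
    exact hbl t ht
  have hTlen : T.length = m * L := by
    rw [hTdef, flatten_length_mul _ hblen]
    simp
  have hLpos : 0 < L := by omega
  set Rest : ℕ → List ℕ := fun t => (((List.range m).map blk).drop (t+1)).flatten
    with hRestdef
  have hsplit : ∀ t, t < m → T.drop (t * L) = blk t ++ Rest t := by
    intro t ht
    rw [hTdef, flatten_drop_mul t _ hblen]
    have hlt : t < ((List.range m).map blk).length := by simpa using ht
    rw [List.drop_eq_getElem_cons hlt]
    simp [hRestdef]
  have hsuf : ∀ t, t < m → ∀ o, o ≤ L → Suf T (t*L + o + 1) = (blk t).drop o ++ Rest t := by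
    intro t ht o ho
    show T.drop (t*L + o + 1 - 1) = _
    rw [Nat.add_sub_cancel, ← List.drop_drop, hsplit t ht,
      List.drop_append]
    have hz : o - (blk t).length = 0 := by rw [hbl t ht]; omega
    rw [hz, List.drop_zero]
  -- positions of symbol 4
  have h4 : ∀ e, T[e]? = some 4 → e % L = ℓ := by
    intro e he
    have helen : e < T.length := by
      rcases List.getElem?_eq_some_iff.mp he with ⟨h, _⟩; exact h
    have ht0 : e / L < m := by
      rw [Nat.div_lt_iff_lt_mul hLpos]
      omega
    obtain ⟨t, o, hto, ho, ht, hoe⟩ :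
        ∃ t o, e = L * t + o ∧ o < L ∧ t < m ∧ o = e % L :=
      ⟨e / L, e % L, (Nat.div_add_mod e L).symm, Nat.mod_lt _ hLpos, ht0, rfl⟩
    have hget : T[e]? = (blk t)[o]? := by
      have h1 : T[e]? = (T.drop (t*L))[o]? := by
        rw [List.getElem?_drop]
        congr 1
        rw [Nat.mul_comm]
        omega
      rw [h1, hsplit t ht, List.getElem?_append]
      rw [hbl t ht]
      simp [ho]
    rw [hget] at he
    have hWl : (W (t+1)).length = ℓ := hWlen (t+1) (by omega) (by omega)
    rcases Nat.lt_trichotomy o ℓ with hc | hc | hc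
    · exfalso
      have h2 : (blk t)[o]? = (W (t+1)).reverse[o]? := by
        show (((W (t+1)).reverse ++ [4]) ++ sEnc k t)[o]? = _
        rw [List.getElem?_append, if_pos (by simp [hWl]; omega),
          List.getElem?_append, if_pos (by simp [hWl]; omega)]
      rw [h2] at he
      obtain ⟨hlt, hgl⟩ := List.getElem?_eq_some_iff.mp he
      have : (4:ℕ) ∈ (W (t+1)).reverse := hgl ▸ List.getElem_mem hlt
      have := hWbin (t+1) (by omega) (by omega) 4 (List.mem_reverse.mp this)
      omega
    · omega
    · exfalso
      have h2 : (blk t)[o]? = (sEnc k t)[o - (ℓ+1)]? := by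
        show (((W (t+1)).reverse ++ [4]) ++ sEnc k t)[o]? = _
        rw [List.getElem?_append_right (by simp [hWl]; omega)]
        congr 1
        simp [hWl]
      rw [h2] at he
      obtain ⟨hlt, hgl⟩ := List.getElem?_eq_some_iff.mp he
      have : (4:ℕ) ∈ sEnc k t := hgl ▸ List.getElem_mem hlt
      rcases sEnc_mem k t 4 this with h | h <;> omega
  have hP0len : P0.length = X.length + 1 := by simp [hP0]
  -- good suffix shape
  have hgood : ∀ t, t < m → X <+: W (t+1) →
      Suf T (t*L + (ℓ - X.length) + 1) = P0 ++ (sEnc k t ++ Rest t) := by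
    intro t ht hpre
    have hWl : (W (t+1)).length = ℓ := hWlen (t+1) (by omega) (by omega)
    rw [hsuf t ht (ℓ - X.length) (by omega)]
    have hdropr : ((W (t+1)).reverse).drop (ℓ - X.length) = X.reverse := by
      rw [List.drop_reverse, hWl]
      have hxx : ℓ - (ℓ - X.length) = X.length := by omega
      rw [hxx]
      congr 1
      exact (List.prefix_iff_eq_take.mp hpre).symm
    show (((W (t+1)).reverse ++ [4]) ++ sEnc k t).drop (ℓ - X.length) ++ Rest t = _
    rw [List.drop_append, List.drop_append]
    have z1 : ℓ - X.length - ((W (t+1)).reverse ++ [4]).length = 0 := by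
      simp [hWl]; omega
    have z2 : ℓ - X.length - (W (t+1)).reverse.length = 0 := by
      simp [hWl]
    rw [z1, z2, List.drop_zero, List.drop_zero, hdropr]
    simp [hP0]
  -- characterization of positions whose suffix starts with P0
  have hchar : ∀ j, 1 ≤ j → j ≤ T.length → P0 <+: Suf T j →
      ∃ t, t < m ∧ j = t*L + (ℓ - X.length) + 1 ∧ X <+: W (t+1) := by
    intro j hj1 hj2 hpre
    obtain ⟨d, rfl⟩ : ∃ d, j = d + 1 := ⟨j - 1, by omega⟩
    have hSd : Suf T (d+1) = T.drop d := by simp [Suf]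
    rw [hSd] at hpre
    have hgx : T[d + X.length]? = some 4 := by
      have h1 : P0[X.length]? = some 4 := by
        rw [hP0, List.getElem?_append_right (by simp)]
        simp
      have hpt := List.prefix_iff_eq_take.mp hpre
      rw [hpt, List.getElem?_take] at h1
      rw [if_pos (by rw [hP0len]; omega)] at h1
      rw [List.getElem?_drop] at h1
      exact h1
    have hmod := h4 _ hgx
    have hdlen : d + X.length < T.length := by
      rcases List.getElem?_eq_some_iff.mp hgx with ⟨h, _⟩; exact h
    have ht0 : d / L < m := by
      rw [Nat.div_lt_iff_lt_mul hLpos]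
      omega
    obtain ⟨t, o, hto, ho, ht, hoe⟩ :
        ∃ t o, d = L * t + o ∧ o < L ∧ t < m ∧ o = d % L :=
      ⟨d / L, d % L, (Nat.div_add_mod d L).symm, Nat.mod_lt _ hLpos, ht0, rfl⟩
    have hoeq : o = ℓ - X.length := by
      by_cases hcase : o + X.length < L
      · have h5 : d + X.length = (o + X.length) + t * L := by
          rw [Nat.mul_comm]; omega
        rw [h5, Nat.add_mul_mod_self_right, Nat.mod_eq_of_lt hcase] at hmod
        omega
      · exfalso
        have h5 : d + X.length = (o + X.length - L) + (t+1) * L := by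
          have : (t+1) * L = t * L + L := by ring
          rw [this, Nat.mul_comm]
          omega
        rw [h5, Nat.add_mul_mod_self_right] at hmod
        have h6 : o + X.length - L < L := by omega
        rw [Nat.mod_eq_of_lt h6] at hmod
        omega
    have hWl : (W (t+1)).length = ℓ := hWlen (t+1) (by omega) (by omega)
    -- suffix shape
    have hdeq2 : d = t * L + (ℓ - X.length) := by
      rw [Nat.mul_comm]
      omega
    have hsufj : T.drop d = (blk t).drop (ℓ - X.length) ++ Rest t := by
      have h9 := hsuf t ht (ℓ - X.length) (by omega)
      rw [show t * L + (ℓ - X.length) + 1 = d + 1 from by omega] at h9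
      have h10 : Suf T (d+1) = T.drop d := by simp [Suf]
      rw [h10] at h9
      exact h9
    have hblkdrop : (blk t).drop (ℓ - X.length) =
        ((W (t+1)).reverse.drop (ℓ - X.length) ++ [4]) ++ sEnc k t := by
      show (((W (t+1)).reverse ++ [4]) ++ sEnc k t).drop (ℓ - X.length) = _
      rw [List.drop_append, List.drop_append]
      have z1 : ℓ - X.length - ((W (t+1)).reverse ++ [4]).length = 0 := by
        simp [hWl]; omega
      have z2 : ℓ - X.length - (W (t+1)).reverse.length = 0 := by
        simp [hWl]
      rw [z1, z2, List.drop_zero, List.drop_zero]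
    have hDlen : ((W (t+1)).reverse.drop (ℓ - X.length)).length = X.length := by
      simp [hWl]
      omega
    -- take X.length of both sides
    have htake1 : (T.drop d).take X.length = X.reverse := by
      have hxp : X.reverse <+: P0 := ⟨[4], rfl⟩
      have := List.prefix_iff_eq_take.mp (hxp.trans hpre)
      rw [List.length_reverse] at this
      exact this.symm
    have htake2 : (T.drop d).take X.length = (W (t+1)).reverse.drop (ℓ - X.length) := by
      rw [hsufj, hblkdrop]
      rw [List.append_assoc, List.append_assoc]
      rw [List.take_append, hDlen]
      simp [List.take_of_length_le (le_of_eq hDlen)]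
    have hD : (W (t+1)).reverse.drop (ℓ - X.length) = ((W (t+1)).take X.length).reverse := by
      rw [List.drop_reverse, hWl, show ℓ - (ℓ - X.length) = X.length from by omega]
    have hXW : X = (W (t+1)).take X.length := by
      have h11 : X.reverse = ((W (t+1)).take X.length).reverse := by
        rw [← htake1, htake2, hD]
      have h12 := congrArg List.reverse h11
      simpa using h12
    exact ⟨t, ht, by omega, List.prefix_iff_eq_take.mpr hXW⟩
  -- the three sets
  set Aset := {j | 1 ≤ j ∧ j ≤ T.length ∧ LexLt (Suf T j) P0} with hAdef
  set Bset := {j | 1 ≤ j ∧ j ≤ T.length ∧ LexLt (Suf T j) (P0 ++ sEnc k i)} with hBdef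
  set Rs := {r | 1 ≤ r ∧ r ≤ i ∧ X <+: W r} with hRdef
  set f : ℕ → ℕ := fun r => (r-1)*L + (ℓ - X.length) + 1 with hfdef
  have hAB : Aset ⊆ Bset := by
    rintro j ⟨h1, h2, h3⟩
    exact ⟨h1, h2, lexlt_append_right _ h3⟩
  have hfinB : Bset.Finite :=
    Set.Finite.subset (Set.finite_Icc 1 T.length) (fun j hj => ⟨hj.1, hj.2.1⟩)
  have hfinA : Aset.Finite := hfinB.subset hAB
  have hilt : i < 2^k := lt_of_le_of_lt hi hmlt
  have hdiff : Bset \ Aset = f '' Rs := by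
    ext j
    constructor
    · rintro ⟨⟨hj1, hj2, hlt1⟩, hnot⟩
      have hnlt : ¬ LexLt (Suf T j) P0 := fun h => hnot ⟨hj1, hj2, h⟩
      have hle : LexLe P0 (Suf T j) := by
        rcases lex_total P0 (Suf T j) with h | h | h
        · exact Or.inl h
        · exact Or.inr h
        · exact absurd h hnlt
      have hpre : P0 <+: Suf T j := prefix_of_lexle_of_lexlt_append hle hlt1
      obtain ⟨t, htm, hjeq, hXpre⟩ := hchar j hj1 hj2 hpre
      have hSuf := hgood t htm hXpre
      rw [hjeq, hSuf, lexlt_append_cancel,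
        lexlt_append_left_of_length_eq _ (by rw [sEnc_length, sEnc_length])] at hlt1
      have hti : t < i :=
        (sEnc_lt_iff k t i (lt_trans htm hmlt) hilt).mp hlt1
      refine ⟨t+1, ⟨by omega, by omega, hXpre⟩, ?_⟩
      simp only [hfdef, Nat.add_sub_cancel]
      omega
    · rintro ⟨r, ⟨hr1, hri, hXpre⟩, rfl⟩
      have htm : r - 1 < m := by omega
      have htr : r - 1 + 1 = r := by omega
      have hXpre' : X <+: W (r - 1 + 1) := by rw [htr]; exact hXpre
      have hSuf := hgood (r-1) htm hXpre'
      have hjeq : f r = (r-1)*L + (ℓ - X.length) + 1 := rfl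
      have hjle : f r ≤ T.length := by
        rw [hTlen, hjeq]
        have h6 : (r-1+1)*L ≤ m*L := Nat.mul_le_mul_right L (by omega)
        have h7 : (r-1+1)*L = (r-1)*L + L := by ring
        omega
      have hlt1 : LexLt (Suf T (f r)) (P0 ++ sEnc k i) := by
        rw [hjeq, hSuf, lexlt_append_cancel,
          lexlt_append_left_of_length_eq _ (by rw [sEnc_length, sEnc_length])]
        exact (sEnc_lt_iff k (r-1) i (lt_trans htm hmlt) hilt).mpr (by omega)
      refine ⟨⟨by omega, hjle, hlt1⟩, ?_⟩
      rintro ⟨-, -, hbad⟩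
      rw [hjeq, hSuf] at hbad
      exact not_lexlt_of_prefix (List.prefix_append P0 _) hbad
  have hinj : Set.InjOn f Rs := by
    intro r1 h1 r2 h2 he
    simp only [hfdef] at he
    have h3 : (r1-1)*L = (r2-1)*L := by omega
    have h4' := Nat.eq_of_mul_eq_mul_right hLpos h3
    have hr1 : 1 ≤ r1 := h1.1
    have hr2 : 1 ≤ r2 := h2.1
    omega
  calc PrefixRank W i X = Rs.ncard := rfl
    _ = (f '' Rs).ncard := (Set.ncard_image_of_injOn hinj).symm
    _ = (Bset \ Aset).ncard := by rw [hdiff]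
    _ = Bset.ncard - Aset.ncard := Set.ncard_diff hAB hfinA
    _ = RangeBeg (P0 ++ sEnc k i) T - RangeBeg P0 T := rfl
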